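/- Termination of the conflict-analysis transition system: if DecVars is finite, then for any input formula F₀, the relation →c — the union of the rules decide, unitPropagate, conflict, explain, backjump, and learn over states (M, F, C, cflct) — is well-founded on the set of states reachable from the initial state ([], F₀, [], ⊥). -/

import Mathlib

namespace SatFormal

/-- Propositional literals: positive or negative variables (variables are naturals). -/
inductive Literal where
  | Pos : Nat → Literal
  | Neg : Nat → Literal
deriving DecidableEq, Repr

/-- The variable of a literal. -/
def Literal.var : Literal → Nat
  | .Pos n => n
  | .Neg n => n

/-- The opposite literal. -/
def Literal.opp : Literal → Literal
  | .Pos n => .Neg n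
  | .Neg n => .Pos n

abbrev Clause := List Literal
abbrev Formula := List Clause
/-- A trail is a list of annotated literals: (literal, decision flag). -/
abbrev Trail := List (Literal × Bool)

/-- Underlying literals of a trail. -/
def elements (M : Trail) : List Literal := M.map Prod.fst
/-- Decision literals of a trail. -/
def decisions (M : Trail) : List Literal := (M.filter (fun a => a.2)).map Prod.fst
/-- Number of decision literals. -/
def currentLevel (M : Trail) : Nat := (M.filter (fun a => a.2)).length

/-- Prefix of the trail up to and including the first occurrence of literal `l`. -/
def prefixTo (l : Literal) (M : Trail) : Trail :=
  M.takeWhile (fun a => decide (a.1 ≠ l)) ++ (M.dropWhile (fun a => decide (a.1 ≠ l))).take 1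

/-- Decision literals preceding the first occurrence of `l` (including `l` if it is one). -/
def decisionsTo (l : Literal) (M : Trail) : List Literal := decisions (prefixTo l M)

/-- Decision level of a literal in a trail. -/
def levelOf (l : Literal) (M : Trail) : Nat := (decisionsTo l M).length

/-- Longest prefix of the trail containing only elements of level ≤ `lv`. -/
def prefixToLevel (lv : Nat) : Trail → Trail
  | [] => []
  | a :: M =>
      if a.2 then (if 0 < lv then a :: prefixToLevel (lv - 1) M else [])
      else a :: prefixToLevel lv M

/-- The last decision literal of a trail (default `Pos 0` when there is none). -/
def lastDecision (M : Trail) : Literal := (decisions M).getLastD (Literal.Pos 0)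

/-- The prefix of the trail before its last decision literal. -/
def prefixBeforeLastDecision (M : Trail) : Trail :=
  ((M.reverse.dropWhile (fun a => !a.2)).tail).reverse

/-- A clause is true in a valuation. -/
def clauseTrue (v : List Literal) (c : Clause) : Prop := ∃ l ∈ c, l ∈ v
/-- A formula is true in a valuation. -/
def formulaTrue (v : List Literal) (F : Formula) : Prop := ∀ c ∈ F, clauseTrue v c
/-- A clause is false in a valuation. -/
def clauseFalse (v : List Literal) (c : Clause) : Prop := ∀ l ∈ c, l.opp ∈ v
/-- A formula is false in a valuation. -/
def formulaFalse (v : List Literal) (F : Formula) : Prop := ∃ c ∈ F, clauseFalse v c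
/-- Consistency of a valuation. -/
def consistent (v : List Literal) : Prop := ¬ ∃ l, l ∈ v ∧ Literal.opp l ∈ v
/-- A model of a formula. -/
def isModel (v : List Literal) (F : Formula) : Prop := consistent v ∧ formulaTrue v F
/-- Satisfiability. -/
def sat (F : Formula) : Prop := ∃ v, isModel v F
/-- A formula entails a clause. -/
def entailsClause (F : Formula) (c : Clause) : Prop := ∀ v, isModel v F → clauseTrue v c
/-- A formula entails a literal. -/
def entailsLit (F : Formula) (l : Literal) : Prop := ∀ v, isModel v F → l ∈ v
/-- Logical equivalence of formulae. -/
def equivFormula (F1 F2 : Formula) : Prop := ∀ v, isModel v F1 ↔ isModel v F2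

/-- Variables of a formula. -/
def varsF (F : Formula) : Set Nat := {n | ∃ c ∈ F, ∃ l ∈ c, Literal.var l = n}
/-- Variables of a valuation. -/
def varsV (v : List Literal) : Set Nat := {n | ∃ l ∈ v, Literal.var l = n}
/-- Variables of a trail. -/
def varsT (M : Trail) : Set Nat := varsV (elements M)

/-- The formula of unit clauses corresponding to a list of literals. -/
def valToForm (v : List Literal) : Formula := v.map (fun l => [l])

/-- A clause is unit in a valuation with unit literal `l`. -/
def isUnit (c : Clause) (l : Literal) (v : List Literal) : Prop :=
  l ∈ c ∧ l ∉ v ∧ l.opp ∉ v ∧ ∀ l' ∈ c, l' ≠ l → Literal.opp l' ∈ v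

/-- `a` precedes `b` in the list `v` (first positions compared). -/
def precedes (a b : Literal) (v : List Literal) : Prop :=
  a ∈ v ∧ b ∈ v ∧ v.idxOf a < v.idxOf b

/-- A clause `c` is a reason for propagation of `l` in valuation `v`. -/
def isReason (c : Clause) (l : Literal) (v : List Literal) : Prop :=
  l ∈ c ∧ l ∈ v ∧ ∀ l' ∈ c, l' ≠ l → Literal.opp l' ∈ v ∧ precedes (Literal.opp l') l v

/-- `l` is the literal of `c` asserted last in `v`. -/
def isLastAsserted (l : Literal) (c : List Literal) (v : List Literal) : Prop :=
  l ∈ c ∧ l ∈ v ∧ ∀ l' ∈ c, l' ∈ v → l' = l ∨ precedes l' l v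

/-- The list of opposites of the literals of a clause. -/
def oppC (c : Clause) : List Literal := c.map Literal.opp

/-- `lv` is a backjump level for literal `l` and clause `c` w.r.t. trail `M`. -/
def isBackjumpLevel (lv : Nat) (l : Literal) (c : Clause) (M : Trail) : Prop :=
  clauseFalse (elements M) c ∧ isLastAsserted l.opp (oppC c) (elements M) ∧
  lv < levelOf l.opp M ∧ ∀ l' ∈ c, l' ≠ l → levelOf (Literal.opp l') M ≤ lv

/-- Minimal backjump level. -/
def isMinimalBackjumpLevel (lv : Nat) (l : Literal) (c : Clause) (M : Trail) : Prop :=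
  isBackjumpLevel lv l c M ∧ ∀ lv' < lv, ¬ isBackjumpLevel lv' l c M

/-- Unique implication point condition. -/
def isUIP (l : Literal) (c : Clause) (M : Trail) : Prop :=
  clauseFalse (elements M) c ∧ isLastAsserted l.opp (oppC c) (elements M) ∧
  ∀ l' ∈ c, l' ≠ l → levelOf (Literal.opp l') M < levelOf l.opp M

/-- Resolution of clauses `C` and `c` over the literal `l`. -/
def resolve (C c : Clause) (l : Literal) : Clause :=
  C.filter (fun x => decide (x ≠ l)) ++ c.filter (fun x => decide (x ≠ l.opp))

/-- Lexicographic extension of a relation to lists. -/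
def lexExt {X : Type _} (r : X → X → Prop) (s t : List X) : Prop :=
  (∃ rr, s = t ++ rr ∧ rr ≠ []) ∨
  (∃ rr s' t' a b, s = rr ++ a :: s' ∧ t = rr ++ b :: t' ∧ r a b)

/-- Ordering on annotated literals: decisions are greater than non-decisions. -/
def litSucc (a b : Literal × Bool) : Prop := a.2 = true ∧ b.2 = false

/-- Trail ordering: lexicographic extension of `litSucc`. -/
def trailSucc : Trail → Trail → Prop := lexExt litSucc

/-- One step of the multiset extension of a relation. -/
def multExtStep {α : Type _} (r : α → α → Prop) (S1 S2 : Multiset α) : Prop :=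
  ∃ (S S2' : Multiset α) (s1 : α), S1 = S + {s1} ∧ S2 = S + S2' ∧ ∀ s2 ∈ S2', r s1 s2

/-- Multiset extension: transitive closure of `multExtStep`. -/
def multExt {α : Type _} (r : α → α → Prop) : Multiset α → Multiset α → Prop :=
  Relation.TransGen (multExtStep r)

/-- Clause ordering induced by a trail `M` (as a list of literals). -/
def clauseSucc (M : List Literal) (C1 C2 : Clause) : Prop :=
  multExt (fun a b => precedes a b M)
    ((oppC C2).dedup : Multiset Literal) ((oppC C1).dedup : Multiset Literal)

/-! ## Basic DPLL system -/

abbrev DState := Trail × Formula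

def decideR (DecVars : Set Nat) (s1 s2 : DState) : Prop :=
  ∃ l : Literal, l.var ∈ DecVars ∧ l ∉ elements s1.1 ∧ l.opp ∉ elements s1.1 ∧
    s2.1 = s1.1 ++ [(l, true)] ∧ s2.2 = s1.2

def unitPropagateR (s1 s2 : DState) : Prop :=
  ∃ c l, c ∈ s1.2 ∧ isUnit c l (elements s1.1) ∧
    s2.1 = s1.1 ++ [(l, false)] ∧ s2.2 = s1.2

def backtrackR (s1 s2 : DState) : Prop :=
  formulaFalse (elements s1.1) s1.2 ∧ decisions s1.1 ≠ [] ∧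
  s2.1 = prefixBeforeLastDecision s1.1 ++ [((lastDecision s1.1).opp, false)] ∧ s2.2 = s1.2

def stepD (DecVars : Set Nat) (s1 s2 : DState) : Prop :=
  unitPropagateR s1 s2 ∨ backtrackR s1 s2 ∨ decideR DecVars s1 s2

def accepting (DecVars : Set Nat) (s : DState) : Prop :=
  ¬ formulaFalse (elements s.1) s.2 ∧
  ¬ ∃ l : Literal, l.var ∈ DecVars ∧ l ∉ elements s.1 ∧ l.opp ∉ elements s.1

def rejecting (s : DState) : Prop :=
  formulaFalse (elements s.1) s.2 ∧ decisions s.1 = []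

/-! ## Conflict analysis system -/

abbrev CState := Trail × Formula × Clause × Bool

def c_decide (DecVars : Set Nat) : CState → CState → Prop :=
  fun (M1, F1, C1, b1) (M2, F2, C2, b2) =>
    (∃ l : Literal, l.var ∈ DecVars ∧ l ∉ elements M1 ∧ l.opp ∉ elements M1 ∧
      M2 = M1 ++ [(l, true)]) ∧ F2 = F1 ∧ C2 = C1 ∧ b2 = b1

def c_unitPropagate (Vars : Set Nat) : CState → CState → Prop :=
  fun (M1, F1, C1, b1) (M2, F2, C2, b2) =>
    (∃ (c : Clause) (l : Literal), entailsClause F1 c ∧ l.var ∈ Vars ∧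
      isUnit c l (elements M1) ∧ M2 = M1 ++ [(l, false)]) ∧
    F2 = F1 ∧ C2 = C1 ∧ b2 = b1

def c_conflict : CState → CState → Prop :=
  fun (M1, F1, C1, b1) (M2, F2, C2, b2) =>
    b1 = false ∧ (∃ c : Clause, entailsClause F1 c ∧ clauseFalse (elements M1) c ∧ C2 = c) ∧
    M2 = M1 ∧ F2 = F1 ∧ b2 = true ∧ C1 = C1

def c_explain : CState → CState → Prop :=
  fun (M1, F1, C1, b1) (M2, F2, C2, b2) =>
    b1 = true ∧ (∃ (l : Literal) (c : Clause), l ∈ C1 ∧ isReason c l.opp (elements M1) ∧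
      entailsClause F1 c ∧ C2 = resolve C1 c l) ∧
    M2 = M1 ∧ F2 = F1 ∧ b2 = true

def c_backjump : CState → CState → Prop :=
  fun (M1, F1, C1, b1) (M2, F2, C2, b2) =>
    b1 = true ∧ (∃ (l : Literal) (lv : Nat), isBackjumpLevel lv l C1 M1 ∧
      M2 = prefixToLevel lv M1 ++ [(l, false)]) ∧
    F2 = F1 ∧ C2 = [] ∧ b2 = false

def c_learn : CState → CState → Prop :=
  fun (M1, F1, C1, b1) (M2, F2, C2, b2) =>
    b1 = true ∧ C1 ∉ F1 ∧ M2 = M1 ∧ F2 = F1 ++ [C1] ∧ C2 = C1 ∧ b2 = b1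

def stepC (F0 : Formula) (DecVars : Set Nat) (s1 s2 : CState) : Prop :=
  c_decide DecVars s1 s2 ∨ c_unitPropagate (varsF F0 ∪ DecVars) s1 s2 ∨
  c_conflict s1 s2 ∨ c_explain s1 s2 ∨ c_backjump s1 s2 ∨ c_learn s1 s2

/-! ## System with restarts and forgetting -/

abbrev RState := Trail × Formula × Clause × Bool × Bool

def r_decide (F0 : Formula) (DecVars : Set Nat) : RState → RState → Prop :=
  fun (M1, Fl1, C1, cf1, ln1) (M2, Fl2, C2, cf2, ln2) =>
    (∃ l : Literal, l.var ∈ DecVars ∧ l ∉ elements M1 ∧ l.opp ∉ elements M1 ∧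
      M2 = M1 ++ [(l, true)]) ∧
    (¬ ∃ (c : Clause) (l : Literal), c ∈ F0 ++ Fl1 ∧ isUnit c l (elements M1)) ∧
    Fl2 = Fl1 ∧ C2 = C1 ∧ cf2 = cf1 ∧ ln2 = ln1

def r_unitPropagate (F0 : Formula) : RState → RState → Prop :=
  fun (M1, Fl1, C1, cf1, ln1) (M2, Fl2, C2, cf2, ln2) =>
    (∃ (c : Clause) (l : Literal), c ∈ F0 ++ Fl1 ∧ isUnit c l (elements M1) ∧
      M2 = M1 ++ [(l, false)]) ∧
    Fl2 = Fl1 ∧ C2 = C1 ∧ cf2 = cf1 ∧ ln2 = ln1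

def r_conflict (F0 : Formula) : RState → RState → Prop :=
  fun (M1, Fl1, C1, cf1, ln1) (M2, Fl2, C2, cf2, ln2) =>
    cf1 = false ∧ (∃ c : Clause, c ∈ F0 ++ Fl1 ∧ clauseFalse (elements M1) c ∧ C2 = c) ∧
    M2 = M1 ∧ Fl2 = Fl1 ∧ cf2 = true ∧ ln2 = ln1 ∧ C1 = C1

def r_explain (F0 : Formula) : RState → RState → Prop :=
  fun (M1, Fl1, C1, cf1, ln1) (M2, Fl2, C2, cf2, ln2) =>
    cf1 = true ∧ (∃ (l : Literal) (c : Clause), l ∈ C1 ∧ isReason c l.opp (elements M1) ∧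
      c ∈ F0 ++ Fl1 ∧ C2 = resolve C1 c l) ∧
    M2 = M1 ∧ Fl2 = Fl1 ∧ cf2 = true ∧ ln2 = ln1

def r_backjumpLearn : RState → RState → Prop :=
  fun (M1, Fl1, C1, cf1, _ln1) (M2, Fl2, C2, cf2, ln2) =>
    cf1 = true ∧ (∃ (l : Literal) (lv : Nat), isMinimalBackjumpLevel lv l C1 M1 ∧
      M2 = prefixToLevel lv M1 ++ [(l, false)]) ∧
    Fl2 = Fl1 ++ [C1] ∧ C2 = [] ∧ cf2 = false ∧ ln2 = true

def r_forget : RState → RState → Prop :=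
  fun (M1, Fl1, C1, cf1, ln1) (M2, Fl2, C2, cf2, ln2) =>
    cf1 = false ∧ ln1 = true ∧
    (∃ Fc : Formula, (∀ c ∈ Fc, c ∈ Fl1) ∧
      (∀ c ∈ Fc, ¬ ∃ l : Literal, isReason c l (elements M1)) ∧
      Fl2 = Fl1.filter (fun c => decide (c ∉ Fc))) ∧
    M2 = M1 ∧ C2 = C1 ∧ cf2 = cf1 ∧ ln2 = false

def r_restart : RState → RState → Prop :=
  fun (M1, Fl1, C1, cf1, ln1) (M2, Fl2, C2, cf2, ln2) =>
    cf1 = false ∧ ln1 = true ∧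
    M2 = prefixToLevel 0 M1 ∧ Fl2 = Fl1 ∧ C2 = C1 ∧ cf2 = cf1 ∧ ln2 = false

/-- The system without `forget` (with `restart`). -/
def stepF (F0 : Formula) (DecVars : Set Nat) (s1 s2 : RState) : Prop :=
  r_decide F0 DecVars s1 s2 ∨ r_unitPropagate F0 s1 s2 ∨ r_conflict F0 s1 s2 ∨
  r_explain F0 s1 s2 ∨ r_backjumpLearn s1 s2 ∨ r_restart s1 s2

/-- The full system with both `restart` and `forget`. -/
def stepAll (F0 : Formula) (DecVars : Set Nat) (s1 s2 : RState) : Prop :=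
  stepF F0 DecVars s1 s2 ∨ r_forget s1 s2

/-- Normalization of a formula: remove duplicate literals and duplicate clauses. -/
def normF (F : Formula) : Formula := (F.map List.dedup).dedup

/-! ### Auxiliary material for the termination proof -/

section Termination

open List

theorem Literal.opp_opp (l : Literal) : l.opp.opp = l := by cases l <;> rfl
theorem Literal.var_opp (l : Literal) : l.opp.var = l.var := by cases l <;> rfl
theorem Literal.opp_ne (l : Literal) : l.opp ≠ l := by cases l <;> simp [Literal.opp]
theorem Literal.opp_inj {a b : Literal} (h : a.opp = b.opp) : a = b := by
  have := congrArg Literal.opp h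
  simpa [Literal.opp_opp] using this
theorem Literal.eq_or_opp {a b : Literal} (h : a.var = b.var) : a = b ∨ a = b.opp := by
  cases a <;> cases b <;> simp_all [Literal.var, Literal.opp]

theorem not_mem_opp {L : List Literal} (h : (L.map Literal.var).Nodup) {l : Literal}
    (h1 : l ∈ L) (h2 : l.opp ∈ L) : False :=
  Literal.opp_ne l (List.inj_on_of_nodup_map h h2 h1 (Literal.var_opp l))

/-- The numeric measure on trails: decisions weigh `4^N`, propagations `2·4^N`. -/
def mu : ℕ → Trail → ℕ
  | _, [] => 0
  | N, a :: M => (if a.2 then 1 else 2) * 4 ^ N + mu (N - 1) M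

theorem mu_append (N : ℕ) (M L : Trail) :
    mu N (M ++ L) = mu N M + mu (N - M.length) L := by
  induction M generalizing N with
  | nil => simp [mu]
  | cons a M ih =>
      simp only [List.cons_append, mu, List.length_cons, List.append_eq, ih (N - 1)]
      have h : N - 1 - M.length = N - (M.length + 1) := by omega
      rw [h, Nat.add_assoc]

theorem mu_lt_append (N : ℕ) (M : Trail) (x : Literal × Bool) :
    mu N M < mu N (M ++ [x]) := by
  rw [mu_append]
  have h4 : 0 < 4 ^ (N - M.length) := pow_pos (by norm_num) _
  have : 0 < mu (N - M.length) [x] := by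
    simp only [mu]
    split <;> omega
  omega

theorem mu_le : ∀ (N : ℕ) (M : Trail), M.length ≤ N + 1 → mu N M ≤ 3 * 4 ^ N := by
  intro N M
  induction M generalizing N with
  | nil => intro _; simp [mu]
  | cons a M ih =>
      intro h
      cases M with
      | nil =>
          simp only [mu]
          have h4 : 0 < 4 ^ N := pow_pos (by norm_num) _
          generalize (4:ℕ) ^ N = x at *
          split <;> omega
      | cons b M' =>
          obtain ⟨N', rfl⟩ : ∃ N', N = N' + 1 := ⟨N - 1, by simp at h; omega⟩
          have hlen : (b :: M').length ≤ N' + 1 := by simp at h ⊢; omega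
          have h1 := ih N' hlen
          generalize hBM : b :: M' = BM at h1 ⊢
          simp only [mu, Nat.add_sub_cancel]
          have h4 : 0 < 4 ^ N' := pow_pos (by norm_num) _
          have hp : (4:ℕ) ^ (N' + 1) = 4 * 4 ^ N' := by ring
          rw [hp]
          generalize (4:ℕ) ^ N' = x at *
          generalize mu N' BM = t at *
          split <;> omega

theorem elements_append (M L : Trail) : elements (M ++ L) = elements M ++ elements L := by
  simp [elements]

theorem clauseFalse_append {v w : List Literal} {C : Clause} (h : clauseFalse v C) :
    clauseFalse (v ++ w) C := fun l hl => List.mem_append_left _ (h l hl)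

theorem isPrefix_cons {α : Type _} (a : α) {P M : List α} (h : P <+: M) :
    a :: P <+: a :: M := by
  obtain ⟨t, rfl⟩ := h; exact ⟨t, rfl⟩

theorem prefixToLevel_isPrefix (lv : ℕ) (M : Trail) : (prefixToLevel lv M) <+: M := by
  induction M generalizing lv with
  | nil => simp [prefixToLevel]
  | cons a M ih =>
      simp only [prefixToLevel]
      split
      · split
        · exact isPrefix_cons a (ih (lv - 1))
        · exact List.nil_prefix
      · exact isPrefix_cons a (ih lv)

theorem currentLevel_mono {P M : Trail} (h : P <+: M) : currentLevel P ≤ currentLevel M := by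
  obtain ⟨Q, rfl⟩ := h
  simp [currentLevel, List.filter_append]

theorem currentLevel_prefixToLevel (lv : ℕ) (M : Trail) :
    currentLevel (prefixToLevel lv M) ≤ lv := by
  induction M generalizing lv with
  | nil => simp [prefixToLevel, currentLevel]
  | cons a M ih =>
      simp only [prefixToLevel]
      split
      · split
        · next ha hlv =>
            have := ih (lv - 1)
            simp only [currentLevel, List.filter_cons, ha, if_true] at this ⊢
            simp only [List.length_cons]
            omega
        · simp [currentLevel]
      · next ha =>
          have := ih lv
          simp only [currentLevel, List.filter_cons] at this ⊢
          simp [ha]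
          simpa using this

theorem prefixToLevel_decomp {lv : ℕ} {M : Trail} (h : lv < currentLevel M) :
    ∃ d R, M = prefixToLevel lv M ++ (d, true) :: R := by
  induction M generalizing lv with
  | nil => simp [currentLevel] at h
  | cons a M ih =>
      obtain ⟨al, ab⟩ := a
      cases ab with
      | true =>
          rcases Nat.eq_zero_or_pos lv with hlv | hlv
          · subst hlv
            exact ⟨al, M, by simp [prefixToLevel]⟩
          · have h' : lv - 1 < currentLevel M := by
              simp only [currentLevel, List.filter_cons] at h ⊢
              simp at h
              omega
            obtain ⟨d, R, hdR⟩ := ih h'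
            refine ⟨d, R, ?_⟩
            simp only [prefixToLevel, if_pos hlv, if_true]
            rw [List.cons_append, ← hdR]
      | false =>
          have h' : lv < currentLevel M := by
            simp only [currentLevel, List.filter_cons] at h
            simpa [currentLevel] using h
          obtain ⟨d, R, hdR⟩ := ih h'
          refine ⟨d, R, ?_⟩
          simp only [prefixToLevel]
          rw [if_neg (by simp), List.cons_append, ← hdR]

theorem prefixTo_cons (x : Literal) (a : Literal × Bool) (M : Trail) :
    prefixTo x (a :: M) = if a.1 = x then [a] else a :: prefixTo x M := by
  by_cases h : a.1 = x <;> simp [prefixTo, List.takeWhile_cons, List.dropWhile_cons, h]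

theorem prefixTo_isPrefix (x : Literal) (M : Trail) : prefixTo x M <+: M := by
  induction M with
  | nil => simp [prefixTo]
  | cons a M ih =>
      rw [prefixTo_cons]
      split
      · exact ⟨M, rfl⟩
      · exact isPrefix_cons a ih

theorem prefixTo_append_of_mem {x : Literal} {P : Trail} (h : x ∈ elements P) (Q : Trail) :
    prefixTo x (P ++ Q) = prefixTo x P := by
  induction P with
  | nil => simp [elements] at h
  | cons a P ih =>
      rw [List.cons_append, prefixTo_cons, prefixTo_cons]
      split
      · rfl
      · next hne =>
          have hx : x ∈ elements P := by
            simp [elements] at h ⊢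
            rcases h with h | h
            · exact absurd h.symm hne
            · exact h
          rw [ih hx]

theorem levelOf_eq (x : Literal) (M : Trail) : levelOf x M = currentLevel (prefixTo x M) := by
  simp [levelOf, decisionsTo, decisions, currentLevel]

theorem levelOf_le_currentLevel (x : Literal) (M : Trail) : levelOf x M ≤ currentLevel M := by
  rw [levelOf_eq]; exact currentLevel_mono (prefixTo_isPrefix x M)

theorem levelOf_le_of_mem_prefix {x : Literal} {P M : Trail} (hP : P <+: M)
    (hx : x ∈ elements P) : levelOf x M ≤ currentLevel P := by
  obtain ⟨Q, rfl⟩ := hP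
  rw [levelOf_eq, prefixTo_append_of_mem hx]
  exact currentLevel_mono (prefixTo_isPrefix x P)

/-- Clause measure relative to a valuation: sum of `2^j` over the indices of the
opposites of the clause literals. -/
def nuC (M : List Literal) (C : Clause) : ℕ :=
  ∑ j ∈ (C.map (fun l => M.idxOf l.opp)).toFinset, 2 ^ j

theorem sum_range_two_pow (n : ℕ) : ∑ j ∈ Finset.range n, 2 ^ j = 2 ^ n - 1 := by
  induction n with
  | zero => simp
  | succ n ih =>
      rw [Finset.sum_range_succ, ih, pow_succ]
      have : 0 < 2 ^ n := pow_pos (by norm_num) _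
      omega

theorem nuC_le (M : List Literal) (C : Clause) : nuC M C ≤ 2 ^ (M.length + 1) - 1 := by
  have hsub : (C.map (fun l => M.idxOf l.opp)).toFinset ⊆ Finset.range (M.length + 1) := by
    intro j hj
    simp only [List.mem_toFinset, List.mem_map] at hj
    obtain ⟨l, _, rfl⟩ := hj
    exact Finset.mem_range.2 (Nat.lt_succ_of_le List.idxOf_le_length)
  calc nuC M C ≤ ∑ j ∈ Finset.range (M.length + 1), 2 ^ j :=
        Finset.sum_le_sum_of_subset hsub
    _ = 2 ^ (M.length + 1) - 1 := sum_range_two_pow _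

theorem sum_union_le (A B : Finset ℕ) (f : ℕ → ℕ) :
    ∑ j ∈ A ∪ B, f j ≤ ∑ j ∈ A, f j + ∑ j ∈ B, f j := by
  have := Finset.sum_union_inter (s₁ := A) (s₂ := B) (f := f)
  omega

theorem mem_resolve {x l : Literal} {C c : Clause} :
    x ∈ resolve C c l ↔ (x ∈ C ∧ x ≠ l) ∨ (x ∈ c ∧ x ≠ l.opp) := by
  simp [resolve, List.mem_append, List.mem_filter]

/-- Key decrease lemma for the `explain` rule. -/
theorem nuC_resolve_lt {M : List Literal} {C c : Clause} {l : Literal}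
    (hl : l ∈ C) (hCf : clauseFalse M C) (hr : isReason c l.opp M) :
    nuC M (resolve C c l) < nuC M C := by
  classical
  set f : Literal → ℕ := fun x => M.idxOf x.opp with hf
  set k : ℕ := M.idxOf l.opp with hk
  set S : Finset ℕ := (C.map f).toFinset with hS
  have hkS : k ∈ S := by
    simp only [hS, List.mem_toFinset, List.mem_map]
    exact ⟨l, hl, rfl⟩
  have hloppM : l.opp ∈ M := hCf l hl
  have hsub : (List.map f (resolve C c l)).toFinset ⊆ S.erase k ∪ Finset.range k := by
    intro j hj
    simp only [List.mem_toFinset, List.mem_map] at hj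
    obtain ⟨x, hx, rfl⟩ := hj
    rcases mem_resolve.1 hx with ⟨hxC, hxl⟩ | ⟨hxc, hxlo⟩
    · apply Finset.mem_union_left
      apply Finset.mem_erase.2
      refine ⟨?_, by simp only [hS, List.mem_toFinset, List.mem_map]; exact ⟨x, hxC, rfl⟩⟩
      intro heq
      have hxoppM : x.opp ∈ M := hCf x hxC
      have : x.opp = l.opp := (List.idxOf_inj hxoppM).1 heq
      exact hxl (Literal.opp_inj this)
    · apply Finset.mem_union_right
      have := (hr.2.2 x hxc hxlo).2
      exact Finset.mem_range.2 this.2.2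
  calc nuC M (resolve C c l)
      ≤ ∑ j ∈ S.erase k ∪ Finset.range k, 2 ^ j := Finset.sum_le_sum_of_subset hsub
    _ ≤ ∑ j ∈ S.erase k, 2 ^ j + ∑ j ∈ Finset.range k, 2 ^ j := sum_union_le _ _ _
    _ = ∑ j ∈ S.erase k, 2 ^ j + (2 ^ k - 1) := by rw [sum_range_two_pow]
    _ < ∑ j ∈ S.erase k, 2 ^ j + 2 ^ k := by
        have : 0 < 2 ^ k := pow_pos (by norm_num) _
        omega
    _ = nuC M C := Finset.sum_erase_add S _ hkS

/-- Invariant maintained by all reachable states. -/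
def Inv (Vars : Set Nat) (s : CState) : Prop :=
  ((elements s.1).map Literal.var).Nodup ∧
  (∀ l ∈ elements s.1, l.var ∈ Vars) ∧
  (s.2.2.2 = true → clauseFalse (elements s.1) s.2.2.1)

/-- Low-order part of the measure. -/
def restM (N : ℕ) (s : CState) : ℕ :=
  (bif s.2.2.2 then 0 else 2 ^ (N + 2)) + 2 * nuC (elements s.1) s.2.2.1 +
    (if s.2.2.1 ∈ s.2.1 then 0 else 1)

/-- Global decreasing measure. -/
def phi (N : ℕ) (s : CState) : ℕ :=
  (3 * 4 ^ N + 1 - mu N s.1) * 2 ^ (N + 3) + restM N s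

theorem length_le_of_inv {VF : Finset ℕ} {Vars : Set Nat} (hV : Vars ⊆ ↑VF) {M : Trail}
    (hnd : ((elements M).map Literal.var).Nodup) (hv : ∀ l ∈ elements M, l.var ∈ Vars) :
    M.length ≤ VF.card := by
  have h1 : ((elements M).map Literal.var).toFinset ⊆ VF := by
    intro n hn
    simp only [List.mem_toFinset, List.mem_map] at hn
    obtain ⟨l, hl, rfl⟩ := hn
    exact hV (hv l hl)
  have h2 := List.toFinset_card_of_nodup hnd
  have h3 := Finset.card_le_card h1
  have h4 : ((elements M).map Literal.var).length = M.length := by simp [elements]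
  omega

theorem restM_lt {N : ℕ} {s : CState} (h : s.1.length ≤ N) : restM N s < 2 ^ (N + 3) := by
  have h1 : nuC (elements s.1) s.2.2.1 ≤ 2 ^ (s.1.length + 1) - 1 := by
    have := nuC_le (elements s.1) s.2.2.1
    simpa [elements] using this
  have h2 : (2:ℕ) ^ (s.1.length + 1) ≤ 2 ^ (N + 1) := Nat.pow_le_pow_right (by norm_num) (by omega)
  have h3 : (2:ℕ) ^ (N + 2) = 2 * 2 ^ (N + 1) := by ring
  have h4 : (2:ℕ) ^ (N + 3) = 4 * 2 ^ (N + 1) := by ring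
  have h5 : 0 < (2:ℕ) ^ (N + 1) := pow_pos (by norm_num) _
  unfold restM
  cases hb : s.2.2.2 <;> simp only [cond_true, cond_false] <;> split <;> omega

theorem phi_lt_of_mu {N : ℕ} {s1 s2 : CState} (h1 : s1.1.length ≤ N) (h2 : s2.1.length ≤ N)
    (hmu : mu N s1.1 < mu N s2.1) : phi N s2 < phi N s1 := by
  have hb1 : mu N s1.1 ≤ 3 * 4 ^ N := mu_le N s1.1 (by omega)
  have hb2 : mu N s2.1 ≤ 3 * 4 ^ N := mu_le N s2.1 (by omega)
  have hr2 : restM N s2 < 2 ^ (N + 3) := restM_lt h2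
  have hr1 : 0 ≤ restM N s1 := Nat.zero_le _
  unfold phi
  have hK : mu N s2.1 ≤ 3 * 4 ^ N + 1 := by omega
  have hlt : 3 * 4 ^ N + 1 - mu N s2.1 < 3 * 4 ^ N + 1 - mu N s1.1 := by omega
  calc (3 * 4 ^ N + 1 - mu N s2.1) * 2 ^ (N + 3) + restM N s2
      < (3 * 4 ^ N + 1 - mu N s2.1) * 2 ^ (N + 3) + 2 ^ (N + 3) := by omega
    _ = (3 * 4 ^ N + 1 - mu N s2.1 + 1) * 2 ^ (N + 3) := by ring
    _ ≤ (3 * 4 ^ N + 1 - mu N s1.1) * 2 ^ (N + 3) := Nat.mul_le_mul_right _ (by omega)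
    _ ≤ (3 * 4 ^ N + 1 - mu N s1.1) * 2 ^ (N + 3) + restM N s1 := Nat.le_add_right _ _

theorem elements_snoc (M : Trail) (l : Literal) (b : Bool) :
    elements (M ++ [(l, b)]) = elements M ++ [l] := by simp [elements]

theorem var_not_mem {M : Trail} {l : Literal}
    (hnl : l ∉ elements M) (hnlo : l.opp ∉ elements M) :
    l.var ∉ (elements M).map Literal.var := by
  intro h
  simp only [List.mem_map] at h
  obtain ⟨y, hy, hvy⟩ := h
  rcases Literal.eq_or_opp hvy with rfl | rfl
  · exact hnl hy
  · exact hnlo hy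

theorem inv_snoc {Vars : Set Nat} {M : Trail} {F : Formula} {C : Clause} {b : Bool}
    {l : Literal} (d : Bool) (h : Inv Vars (M, F, C, b)) (hv : l.var ∈ Vars)
    (hnl : l ∉ elements M) (hnlo : l.opp ∉ elements M) :
    Inv Vars (M ++ [(l, d)], F, C, b) := by
  obtain ⟨hnd, hvars, hCf⟩ := h
  refine ⟨?_, ?_, ?_⟩
  · rw [elements_snoc, List.map_append]
    simp only [List.map_cons, List.map_nil]
    simp [List.nodup_append, hnd, var_not_mem hnl hnlo]
    exact fun a ha h => var_not_mem hnl hnlo (List.mem_map.2 ⟨a, ha, h⟩)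
  · intro x hx
    rw [elements_snoc] at hx
    rcases List.mem_append.1 hx with hx | hx
    · exact hvars x hx
    · simp at hx; subst hx; exact hv
  · intro hb
    rw [elements_snoc]
    exact clauseFalse_append (hCf hb)

theorem restM_conflict {N : ℕ} {M : Trail} {F F' : Formula} {C C' : Clause}
    (hlen : M.length ≤ N) :
    restM N (M, F', C', true) < restM N (M, F, C, false) := by
  have h1 : nuC (elements M) C' ≤ 2 ^ (M.length + 1) - 1 := by
    simpa [elements] using nuC_le (elements M) C'
  have e1 : (2:ℕ) ^ (M.length + 1) ≤ 2 ^ (N + 1) :=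
    Nat.pow_le_pow_right (by norm_num) (by omega)
  have e2 : (2:ℕ) ^ (N + 2) = 2 * 2 ^ (N + 1) := by ring
  have e3 : 0 < (2:ℕ) ^ (N + 1) := pow_pos (by norm_num) _
  unfold restM
  simp only [cond_true, cond_false]
  split <;> split <;> omega

theorem restM_explain {N : ℕ} {M : Trail} {F F' : Formula} {C C' : Clause}
    (hlt : nuC (elements M) C' < nuC (elements M) C) :
    restM N (M, F', C', true) < restM N (M, F, C, true) := by
  unfold restM
  simp only [cond_true]
  split <;> split <;> omega

theorem restM_learn {N : ℕ} {M : Trail} {F : Formula} {C : Clause} (h : C ∉ F) :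
    restM N (M, F ++ [C], C, true) < restM N (M, F, C, true) := by
  unfold restM
  have e1 : (if C ∈ F ++ [C] then (0:ℕ) else 1) = 0 := if_pos (by simp)
  have e2 : (if C ∈ F then (0:ℕ) else 1) = 1 := if_neg h
  simp only [cond_true, e1, e2]
  omega

theorem step_decrease {DecVars : Set Nat} {F0 : Formula} {VF : Finset ℕ}
    (hV : varsF F0 ∪ DecVars ⊆ ↑VF) {s1 s2 : CState}
    (h1 : Inv (varsF F0 ∪ DecVars) s1) (hs : stepC F0 DecVars s1 s2) :
    Inv (varsF F0 ∪ DecVars) s2 ∧ phi VF.card s2 < phi VF.card s1 := by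
  classical
  obtain ⟨M1, F1, C1, b1⟩ := s1
  obtain ⟨M2, F2, C2, b2⟩ := s2
  have hlen1 : M1.length ≤ VF.card := length_le_of_inv hV h1.1 h1.2.1
  rcases hs with h | h | h | h | h | h
  · -- decide
    obtain ⟨⟨l, hvar, hnl, hnlo, hM2⟩, hF2, hC2, hb2⟩ := h
    subst hM2 hF2 hC2 hb2
    have hinv2 := inv_snoc true h1 (Set.mem_union_right _ hvar) hnl hnlo
    exact ⟨hinv2, phi_lt_of_mu hlen1
      (length_le_of_inv hV hinv2.1 hinv2.2.1) (mu_lt_append _ _ _)⟩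
  · -- unitPropagate
    obtain ⟨⟨c, l, hent, hvar, hunit, hM2⟩, hF2, hC2, hb2⟩ := h
    subst hM2 hF2 hC2 hb2
    have hinv2 := inv_snoc false h1 hvar hunit.2.1 hunit.2.2.1
    exact ⟨hinv2, phi_lt_of_mu hlen1
      (length_le_of_inv hV hinv2.1 hinv2.2.1) (mu_lt_append _ _ _)⟩
  · -- conflict
    obtain ⟨hb1, ⟨c, hent, hcf, hC2⟩, hM2, hF2, hb2, -⟩ := h
    subst hb1 hC2 hM2 hF2 hb2
    refine ⟨⟨h1.1, h1.2.1, fun _ => hcf⟩, ?_⟩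
    unfold phi
    exact Nat.add_lt_add_left (restM_conflict hlen1) _
  · -- explain
    obtain ⟨hb1, ⟨l, c, hlC, hreason, hent, hC2⟩, hM2, hF2, hb2⟩ := h
    subst hb1 hC2 hM2 hF2 hb2
    have hCf1 := h1.2.2 rfl
    refine ⟨⟨h1.1, h1.2.1, fun _ => ?_⟩, ?_⟩
    · intro x hx
      rcases mem_resolve.1 hx with ⟨hxC, _⟩ | ⟨hxc, hxne⟩
      · exact hCf1 x hxC
      · exact (hreason.2.2 x hxc hxne).1
    · unfold phi
      exact Nat.add_lt_add_left (restM_explain (nuC_resolve_lt hlC hCf1 hreason)) _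
  · -- backjump
    obtain ⟨hb1, ⟨l, lv, hbj, hM2⟩, hF2, hC2, hb2⟩ := h
    obtain ⟨hCfalse, hlast, hlv, -⟩ := hbj
    subst hb1 hF2 hC2 hb2 hM2
    have hnd := h1.1
    have hvars := h1.2.1
    have hPpre : prefixToLevel lv M1 <+: M1 := prefixToLevel_isPrefix lv M1
    have hPsub : elements (prefixToLevel lv M1) ⊆ elements M1 :=
      ((hPpre.map Prod.fst).sublist).subset
    have hloppM : l.opp ∈ elements M1 := hlast.2.1
    have hlvM : lv < currentLevel M1 := lt_of_lt_of_le hlv (levelOf_le_currentLevel _ _)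
    obtain ⟨d, R, hdec⟩ := prefixToLevel_decomp hlvM
    have hloppP : l.opp ∉ elements (prefixToLevel lv M1) := by
      intro hmem
      have ha := levelOf_le_of_mem_prefix hPpre hmem
      have hb := currentLevel_prefixToLevel lv M1
      omega
    have hlP : l ∉ elements (prefixToLevel lv M1) := by
      intro hmem
      exact not_mem_opp hnd (hPsub hmem) hloppM
    have hvl : l.var ∈ varsF F0 ∪ DecVars := by
      have := hvars l.opp hloppM
      rwa [Literal.var_opp] at this
    refine ⟨inv_snoc false ⟨((hPpre.map Prod.fst).map Literal.var).sublist.nodup hnd,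
      fun x hx => hvars x (hPsub hx), fun hb => by simp at hb⟩ hvl hlP hloppP, ?_⟩
    have hlen_eq : M1.length = (prefixToLevel lv M1).length + R.length + 1 := by
      conv_lhs => rw [hdec]
      simp; omega
    have hlen2 : (prefixToLevel lv M1 ++ [(l, false)]).length ≤ VF.card := by
      simp; omega
    apply phi_lt_of_mu hlen1 hlen2
    have eA := congrArg (mu VF.card) hdec
    rw [mu_append] at eA
    have eB := mu_append VF.card (prefixToLevel lv M1) [(l, false)]
    simp only [mu] at eA eB
    simp at eA eB
    have hmuR : mu (VF.card - (prefixToLevel lv M1).length - 1) R ≤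
        3 * 4 ^ (VF.card - (prefixToLevel lv M1).length - 1) :=
      mu_le _ _ (by omega)
    have h4 : (4:ℕ) ^ (VF.card - (prefixToLevel lv M1).length) =
        4 * 4 ^ (VF.card - (prefixToLevel lv M1).length - 1) := by
      have hh : VF.card - (prefixToLevel lv M1).length =
          (VF.card - (prefixToLevel lv M1).length - 1) + 1 := by omega
      conv_lhs => rw [hh]
      rw [pow_succ]; ring
    have hx : 0 < (4:ℕ) ^ (VF.card - (prefixToLevel lv M1).length - 1) :=
      pow_pos (by norm_num) _
    rw [eA, eB, h4]
    generalize (4:ℕ) ^ (VF.card - (prefixToLevel lv M1).length - 1) = x at hmuR hx ⊢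
    omega
  · -- learn
    obtain ⟨hb1, hC1F, hM2, hF2, hC2, hb2⟩ := h
    subst hb1 hM2 hF2 hC2 hb2
    refine ⟨⟨h1.1, h1.2.1, fun _ => h1.2.2 rfl⟩, ?_⟩
    unfold phi
    exact Nat.add_lt_add_left (restM_learn hC1F) _

theorem varsF_finite (F : Formula) : (varsF F).Finite := by
  apply Set.Finite.subset ((F.flatMap (fun c => c.map Literal.var)).toFinset.finite_toSet)
  intro n hn
  obtain ⟨c, hc, l, hl, rfl⟩ := hn
  simp only [Finset.coe_sort_coe, Finset.mem_coe, List.mem_toFinset, List.mem_flatMap,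
    List.mem_map]
  exact ⟨c, hc, l, hl, rfl⟩

end Termination

/-- termination of the conflict-analysis transition system on reachable
states. -/
theorem stmt16 (DecVars : Set Nat) (hfin : DecVars.Finite) (F0 : Formula) :
    WellFounded (fun s2 s1 : CState =>
      Relation.ReflTransGen (stepC F0 DecVars) ([], F0, [], false) s1 ∧
      stepC F0 DecVars s1 s2) := by
  classical
  have hU : (varsF F0 ∪ DecVars).Finite := (varsF_finite F0).union hfin
  have hV : varsF F0 ∪ DecVars ⊆ ↑hU.toFinset := by rw [Set.Finite.coe_toFinset]
  have hinit : Inv (varsF F0 ∪ DecVars) ([], F0, [], false) :=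
    ⟨by simp [elements], by simp [elements], by simp⟩
  have hreach : ∀ s, Relation.ReflTransGen (stepC F0 DecVars) ([], F0, [], false) s →
      Inv (varsF F0 ∪ DecVars) s := by
    intro s h
    induction h with
    | refl => exact hinit
    | tail _ hstep ih => exact (step_decrease hV ih hstep).1
  exact Subrelation.wf
    (fun {s2 s1} h => (step_decrease hV (hreach s1 h.1) h.2).2)
    (InvImage.wf (phi hU.toFinset.card) Nat.lt_wfRel.wf)

end SatFormal
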